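/- (Respect for unanimity) If v is a convex combination of definitely consistent partial truth assignments and v_p = 1 for some literal p, then p is accepted by the basic decision associated with the upper revised valuation, i.e. v*_p > v*_{¬p}. -/

import Mathlib

open Finset

structure Doctrine (L : Type) [DecidableEq L] (neg : L → L) where
  clauses : Finset (Finset L)
  two_le : ∀ C ∈ clauses, 2 ≤ C.card
  tnd : ∀ p : L, ({p, neg p} : Finset L) ∈ clauses

noncomputable def clauseMin {L : Type} [DecidableEq L] (neg : L → L) (v : L → ℝ) (p : L)
    (C : Finset L) : ℝ :=
  if h : (C.erase p).Nonempty then (C.erase p).inf' h (fun q => v (neg q)) else 0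

noncomputable def step {L : Type} [DecidableEq L] (neg : L → L) (D : Doctrine L neg)
    (v : L → ℝ) : L → ℝ := fun p =>
  (D.clauses.filter (fun C => p ∈ C)).sup'
    ⟨{p, neg p}, Finset.mem_filter.mpr ⟨D.tnd p, by simp⟩⟩
    (clauseMin neg v p)

theorem respect_unanimity {L : Type} [Fintype L] [DecidableEq L]
    (neg : L → L) (hneg : ∀ p, neg (neg p) = p) (D : Doctrine L neg)
    (K : ℕ) (u : Fin K → L → ℝ) (lam : Fin K → ℝ)
    (hlam : ∀ k, 0 ≤ lam k) (hsum : ∑ k, lam k = 1)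
    (hpta : ∀ k, ∀ p, (u k p = 0 ∨ u k p = 1/2 ∨ u k p = 1) ∧ u k p + u k (neg p) = 1)
    (hdc : ∀ k, ∀ C ∈ D.clauses, ∀ p ∈ C, (∀ q ∈ C, q ≠ p → u k q = 0) → u k p = 1)
    (v vs : L → ℝ) (hv : ∀ p, v p = ∑ k, lam k * u k p)
    (hvs : ∃ n : ℕ, vs = (step neg D)^[n] v) (hfix : step neg D vs = vs) :
    ∀ p, v p = 1 → vs p > vs (neg p) := by
  intro p hp
  obtain ⟨n, rfl⟩ := hvs
  clear hfix
  -- neg q ≠ q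
  have hne : ∀ q : L, neg q ≠ q := by
    intro q h
    have h2 := D.two_le _ (D.tnd q)
    rw [h] at h2
    simp at h2
  have hle1 : ∀ k q, u k q ≤ 1 := by
    intro k q; rcases (hpta k q).1 with h | h | h <;> rw [h] <;> norm_num
  -- step increases values
  have hstep_ge : ∀ w : L → ℝ, ∀ q, w q ≤ step neg D w q := by
    intro w q
    have hmem : ({q, neg q} : Finset L) ∈ D.clauses.filter (fun C => q ∈ C) :=
      Finset.mem_filter.mpr ⟨D.tnd q, by simp⟩
    have herase : ({q, neg q} : Finset L).erase q = {neg q} := by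
      rw [Finset.erase_insert (by simp [Ne.symm (hne q)])]
    have h1 : clauseMin neg w q {q, neg q} = w q := by
      rw [clauseMin, dif_pos (by rw [herase]; exact ⟨neg q, by simp⟩)]
      simp [herase, hneg]
    calc w q = clauseMin neg w q {q, neg q} := h1.symm
      _ ≤ _ := Finset.le_sup' _ hmem
  -- vs p ≥ 1
  have hiter_ge : ∀ m : ℕ, 1 ≤ (step neg D)^[m] v p := by
    intro m
    induction m with
    | zero => simp [hp]
    | succ m ih =>
      rw [Function.iterate_succ_apply']
      exact le_trans ih (hstep_ge _ p)
  -- find a positive weight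
  obtain ⟨k0, hk0⟩ : ∃ k, 0 < lam k := by
    by_contra h
    push_neg at h
    have : ∑ k, lam k ≤ 0 := Finset.sum_nonpos (fun k _ => h k)
    linarith
  -- u k0 p = 1
  have hz : ∀ q, ∑ j, lam j * (1 - u j q) = 1 - v q := by
    intro q
    rw [hv q]
    simp [mul_sub, Finset.sum_sub_distrib, hsum]
  have hterm0 : lam k0 * (1 - u k0 p) = 0 := by
    have h0 : ∑ j, lam j * (1 - u j p) = 0 := by rw [hz p, hp]; ring
    exact (Finset.sum_eq_zero_iff_of_nonneg
      (fun k _ => mul_nonneg (hlam k) (by linarith [hle1 k p]))).mp h0 k0 (Finset.mem_univ k0)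
  have hup : u k0 p = 1 := by
    rcases mul_eq_zero.mp hterm0 with h | h
    · linarith
    · linarith
  -- the invariant
  have hbase : ∀ q, u k0 q ≤ 1/2 → v q ≤ (1 - lam k0 / 2) := by
    intro q hq
    have hs := Finset.single_le_sum (f := fun j => lam j * (1 - u j q))
      (fun k _ => mul_nonneg (hlam k) (by linarith [hle1 k q])) (Finset.mem_univ k0)
    rw [hz q] at hs
    try simp only at hs
    have hmul : lam k0 / 2 ≤ lam k0 * (1 - u k0 q) := by
      have := mul_le_mul_of_nonneg_left (show (1:ℝ)/2 ≤ 1 - u k0 q by linarith) (hlam k0)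
      linarith [this, (by ring : lam k0 * (1/2) = lam k0 / 2)]
    linarith
  have hindstep : ∀ w : L → ℝ, (∀ q, u k0 q ≤ 1/2 → w q ≤ (1 - lam k0 / 2)) →
      ∀ q, u k0 q ≤ 1/2 → step neg D w q ≤ (1 - lam k0 / 2) := by
    intro w hw q hq
    refine Finset.sup'_le _ _ (fun C hC => ?_)
    obtain ⟨hCD, hqC⟩ := Finset.mem_filter.mp hC
    obtain ⟨r, hrm, hr0⟩ : ∃ r ∈ C.erase q, u k0 r ≠ 0 := by
      by_contra h
      push_neg at h
      have := hdc k0 C hCD q hqC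
        (fun r hrC hrq => h r (Finset.mem_erase.mpr ⟨hrq, hrC⟩))
      linarith
    rw [clauseMin, dif_pos ⟨r, hrm⟩]
    refine le_trans (Finset.inf'_le _ hrm) (hw _ ?_)
    have hr2 : (1:ℝ)/2 ≤ u k0 r := by
      rcases (hpta k0 r).1 with h | h | h
      · exact absurd h hr0
      · rw [h]
      · rw [h]; norm_num
    have := (hpta k0 r).2
    linarith
  have hinv : ∀ m : ℕ, ∀ q, u k0 q ≤ 1/2 → (step neg D)^[m] v q ≤ (1 - lam k0 / 2) := by
    intro m
    induction m with
    | zero => exact hbase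
    | succ m ih =>
      rw [Function.iterate_succ_apply']
      exact hindstep _ ih
  have hnp : u k0 (neg p) ≤ 1/2 := by have := (hpta k0 p).2; linarith
  have h1 := hinv n (neg p) hnp
  have h2 := hiter_ge n
  have : (1 - lam k0 / 2) < 1 := by linarith
  linarith
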